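/- Consider a logistic regression with offsets: let x_1,…,x_n ∈ ℝ^P be covariate vectors (rows of the n × P matrix X), s̄_1,…,s̄_n ∈ [0,1] fractional responses, and a_1,…,a_n ∈ ℝ offsets, and define ℓ*(β) = Σᵢ [s̄ᵢ·(xᵢᵀβ − aᵢ) − log(1 + exp(xᵢᵀβ − aᵢ))]. Given a current iterate β⁰, set ψᵢ = xᵢᵀβ⁰ − aᵢ, ωᵢ = tanh(ψᵢ/2)/(2ψᵢ) if ψᵢ ≠ 0 and ωᵢ = 1/4 if ψᵢ = 0, ηᵢ = (s̄ᵢ − 1/2 + ωᵢ·aᵢ)/ωᵢ, and Ω = diag(ω₁,…,ωₙ). If XᵀΩX is invertible, then the Pólya-gamma EM update β¹ = (XᵀΩX)⁻¹XᵀΩη satisfies ℓ*(β¹) ≥ ℓ*(β⁰). -/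

import Mathlib

open Matrix

/-- Pólya-gamma weight. -/
noncomputable def pgw (ψ : ℝ) : ℝ := if ψ = 0 then 1 / 4 else Real.tanh (ψ / 2) / (2 * ψ)

lemma tanh_pos_of_pos {x : ℝ} (hx : 0 < x) : 0 < Real.tanh x := by
  rw [Real.tanh_eq_sinh_div_cosh]
  exact div_pos (Real.sinh_pos_iff.2 hx) (Real.cosh_pos x)

lemma pgw_pos (ψ : ℝ) : 0 < pgw ψ := by
  unfold pgw
  rcases lt_trichotomy ψ 0 with h | h | h
  · rw [if_neg h.ne]
    have h1 : 0 < Real.tanh (-ψ / 2) := tanh_pos_of_pos (by linarith)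
    have h2 : Real.tanh (ψ / 2) = -Real.tanh (-ψ / 2) := by
      rw [← Real.tanh_neg]; ring_nf
    rw [h2]
    exact div_pos_of_neg_of_neg (by linarith) (by linarith)
  · simp [h]
  · rw [if_neg h.ne']
    exact div_pos (tanh_pos_of_pos (by linarith)) (by linarith)

lemma pgw_abs (ψ : ℝ) : pgw |ψ| = pgw ψ := by
  unfold pgw
  rcases le_or_gt 0 ψ with h | h
  · rw [abs_of_nonneg h]
  · rw [abs_of_neg h, if_neg (by linarith : (-ψ : ℝ) ≠ 0), if_neg h.ne]
    have h2 : Real.tanh (-ψ / 2) = -Real.tanh (ψ / 2) := by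
      rw [← Real.tanh_neg]; ring_nf
    rw [h2]
    ring

lemma sinh_le_mul_cosh {x : ℝ} (hx : 0 ≤ x) : Real.sinh x ≤ x * Real.cosh x := by
  have hd : ∀ y : ℝ, HasDerivAt (fun x : ℝ => x * Real.cosh x - Real.sinh x)
      (y * Real.sinh y) y := by
    intro y
    have h := ((hasDerivAt_id y).mul (Real.hasDerivAt_cosh y)).sub (Real.hasDerivAt_sinh y)
    refine h.congr_deriv ?_
    simp only [id]
    ring
  have hmono : MonotoneOn (fun x : ℝ => x * Real.cosh x - Real.sinh x) (Set.Ici 0) := by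
    apply monotoneOn_of_deriv_nonneg (convex_Ici 0)
    · exact (continuous_iff_continuousAt.2 fun y => (hd y).continuousAt).continuousOn
    · intro y _; exact (hd y).differentiableAt.differentiableWithinAt
    · intro y hy
      rw [interior_Ici] at hy
      rw [(hd y).deriv]
      exact mul_nonneg (le_of_lt hy) (Real.sinh_nonneg_iff.2 (le_of_lt hy))
  have h0 := hmono Set.self_mem_Ici (Set.mem_Ici.2 hx) hx
  simp only [Real.cosh_zero, Real.sinh_zero, mul_one, zero_mul, sub_zero, zero_sub, neg_zero] at h0
  linarith

lemma tanh_le_self {x : ℝ} (hx : 0 ≤ x) : Real.tanh x ≤ x := by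
  rw [Real.tanh_eq_sinh_div_cosh, div_le_iff₀ (Real.cosh_pos x)]
  exact sinh_le_mul_cosh hx

lemma self_le_sinh_mul_cosh {x : ℝ} (hx : 0 ≤ x) : x ≤ Real.sinh x * Real.cosh x := by
  rcases eq_or_lt_of_le hx with h | h
  · simp [← h]
  · have h1 : x ≤ Real.sinh x := le_of_lt (Real.self_lt_sinh_iff.2 h)
    nlinarith [Real.one_le_cosh x, Real.sinh_pos_iff.2 h]

lemma hasDerivAt_tanh' (x : ℝ) :
    HasDerivAt Real.tanh (1 / Real.cosh x ^ 2) x := by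
  have h : HasDerivAt (fun y => Real.sinh y / Real.cosh y)
      ((Real.cosh x * Real.cosh x - Real.sinh x * Real.sinh x) / Real.cosh x ^ 2) x :=
    (Real.hasDerivAt_sinh x).div (Real.hasDerivAt_cosh x) (ne_of_gt (Real.cosh_pos x))
  have hfun : (fun y => Real.sinh y / Real.cosh y) = Real.tanh := by
    funext y; rw [Real.tanh_eq_sinh_div_cosh]
  rw [hfun] at h
  convert h using 2
  nlinarith [Real.cosh_sq_sub_sinh_sq x]

/-- `tanh x / x` is antitone on positives. -/
lemma tanh_div_antitone {s t : ℝ} (hs : 0 < s) (hst : s ≤ t) :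
    Real.tanh t / t ≤ Real.tanh s / s := by
  have hanti : AntitoneOn (fun x : ℝ => Real.tanh x / x) (Set.Icc s t) := by
    apply antitoneOn_of_deriv_nonpos (convex_Icc s t)
    · apply ContinuousOn.div (continuous_iff_continuousAt.2 fun y => (hasDerivAt_tanh' y).continuousAt).continuousOn continuousOn_id
      intro x hx; exact ne_of_gt (lt_of_lt_of_le hs hx.1)
    · intro x hx
      rw [interior_Icc] at hx
      have hx0 : x ≠ 0 := ne_of_gt (lt_trans hs hx.1)
      exact ((hasDerivAt_tanh' x).div (hasDerivAt_id x) hx0).differentiableAt.differentiableWithinAt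
    · intro x hx
      rw [interior_Icc] at hx
      have hx0 : 0 < x := lt_trans hs hx.1
      have hd : HasDerivAt (fun x : ℝ => Real.tanh x / x)
          ((1 / Real.cosh x ^ 2 * x - Real.tanh x * 1) / x ^ 2) x :=
        (hasDerivAt_tanh' x).div (hasDerivAt_id x) (ne_of_gt hx0)
      rw [hd.deriv]
      apply div_nonpos_of_nonpos_of_nonneg _ (sq_nonneg x)
      have hch := Real.cosh_pos x
      have hkey := self_le_sinh_mul_cosh (le_of_lt hx0)
      rw [Real.tanh_eq_sinh_div_cosh]
      have hrw : 1 / Real.cosh x ^ 2 * x - Real.sinh x / Real.cosh x * 1 =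
          (x - Real.sinh x * Real.cosh x) / Real.cosh x ^ 2 := by
        field_simp
      rw [hrw]
      apply div_nonpos_of_nonpos_of_nonneg (by linarith) (by positivity)
  exact hanti (Set.mem_Icc.2 ⟨le_refl s, hst⟩) (Set.mem_Icc.2 ⟨hst, le_refl t⟩) hst

lemma pgw_eq_of_pos {t : ℝ} (ht : 0 < t) : pgw t = Real.tanh (t / 2) / (t / 2) / 4 := by
  unfold pgw
  rw [if_neg ht.ne']
  field_simp
  ring

lemma pgw_antitone {s t : ℝ} (hs : 0 ≤ s) (hst : s ≤ t) : pgw t ≤ pgw s := by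
  rcases eq_or_lt_of_le hs with h0 | h0
  · rcases eq_or_lt_of_le hst with h1 | h1
    · rw [← h1]
    · rw [← h0] at h1 ⊢
      rw [pgw_eq_of_pos h1]
      have hp0 : pgw 0 = 1 / 4 := by unfold pgw; simp
      rw [hp0]
      have h2 : Real.tanh (t / 2) / (t / 2) ≤ 1 := by
        rw [div_le_one (by linarith)]
        exact tanh_le_self (by linarith)
      linarith
  · rw [pgw_eq_of_pos h0, pgw_eq_of_pos (lt_of_lt_of_le h0 hst)]
    have := tanh_div_antitone (by linarith : (0:ℝ) < s / 2) (by linarith : s / 2 ≤ t / 2)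
    linarith

lemma logcosh_bound_nonneg {s t : ℝ} (hs : 0 ≤ s) (ht : 0 ≤ t) :
    Real.log (Real.cosh (t / 2)) - Real.log (Real.cosh (s / 2)) ≤
      pgw s / 2 * (t ^ 2 - s ^ 2) := by
  set c := pgw s with hc
  set F : ℝ → ℝ := fun x => c / 2 * x ^ 2 - Real.log (Real.cosh (x / 2)) with hF
  have hd : ∀ x : ℝ, HasDerivAt F (c * x - Real.tanh (x / 2) / 2) x := by
    intro x
    have h1 : HasDerivAt (fun x : ℝ => x / 2) (1 / 2) x := by
      simpa using (hasDerivAt_id x).div_const 2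
    have h2 : HasDerivAt (fun x : ℝ => Real.cosh (x / 2)) (Real.sinh (x / 2) * (1 / 2)) x :=
      (Real.hasDerivAt_cosh (x / 2)).comp (h₂ := Real.cosh) x h1
    have h3 : HasDerivAt (fun x : ℝ => Real.log (Real.cosh (x / 2)))
        (Real.sinh (x / 2) * (1 / 2) / Real.cosh (x / 2)) x :=
      h2.log (ne_of_gt (Real.cosh_pos _))
    have h4 : HasDerivAt (fun x : ℝ => c / 2 * x ^ 2) (c / 2 * (2 * x)) x := by
      simpa using (hasDerivAt_pow 2 x).const_mul (c / 2)
    have h5 := h4.sub h3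
    refine h5.congr_deriv ?_
    rw [Real.tanh_eq_sinh_div_cosh]
    field_simp
  have hx_mul : ∀ x : ℝ, 0 < x → x * pgw x = Real.tanh (x / 2) / 2 := by
    intro x hx
    unfold pgw
    rw [if_neg hx.ne']
    field_simp
  have hcont : Continuous F := continuous_iff_continuousAt.2 fun x => (hd x).continuousAt
  have hmono : MonotoneOn F (Set.Ici s) := by
    apply monotoneOn_of_deriv_nonneg (convex_Ici s) hcont.continuousOn
      (fun x _ => (hd x).differentiableAt.differentiableWithinAt)
    intro x hx
    rw [interior_Ici] at hx
    have hx0 : 0 < x := lt_of_le_of_lt hs hx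
    rw [(hd x).deriv, ← hx_mul x hx0]
    have := pgw_antitone hs (le_of_lt hx)
    nlinarith
  have hanti : AntitoneOn F (Set.Icc 0 s) := by
    apply antitoneOn_of_deriv_nonpos (convex_Icc 0 s) hcont.continuousOn
      (fun x _ => (hd x).differentiableAt.differentiableWithinAt)
    intro x hx
    rw [interior_Icc] at hx
    have hx0 : 0 < x := hx.1
    rw [(hd x).deriv, ← hx_mul x hx0]
    have := pgw_antitone (le_of_lt hx0) (le_of_lt hx.2)
    nlinarith
  have hFst : F s ≤ F t := by
    rcases le_or_gt t s with h | h
    · exact hanti (Set.mem_Icc.2 ⟨ht, h⟩) (Set.mem_Icc.2 ⟨hs, le_refl s⟩) h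
    · exact hmono Set.self_mem_Ici (Set.mem_Ici.2 (le_of_lt h)) (le_of_lt h)
  simp only [hF] at hFst
  linarith

lemma logcosh_bound (ψ z : ℝ) :
    Real.log (Real.cosh (z / 2)) - Real.log (Real.cosh (ψ / 2)) ≤
      pgw ψ / 2 * (z ^ 2 - ψ ^ 2) := by
  have h := logcosh_bound_nonneg (abs_nonneg ψ) (abs_nonneg z)
  rw [pgw_abs] at h
  have h1 : Real.cosh (|z| / 2) = Real.cosh (z / 2) := by
    rw [show |z| / 2 = |z / 2| by rw [abs_div]; norm_num]
    exact Real.cosh_abs _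
  have h2 : Real.cosh (|ψ| / 2) = Real.cosh (ψ / 2) := by
    rw [show |ψ| / 2 = |ψ / 2| by rw [abs_div]; norm_num]
    exact Real.cosh_abs _
  rw [h1, h2, sq_abs, sq_abs] at h
  exact h

lemma log_one_add_exp (x : ℝ) :
    Real.log (1 + Real.exp x) = x / 2 + Real.log 2 + Real.log (Real.cosh (x / 2)) := by
  have h : (1 : ℝ) + Real.exp x = Real.exp (x / 2) * (2 * Real.cosh (x / 2)) := by
    rw [Real.cosh_eq]
    rw [show (2 : ℝ) * ((Real.exp (x / 2) + Real.exp (-(x / 2))) / 2) =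
      Real.exp (x / 2) + Real.exp (-(x / 2)) by ring]
    rw [mul_add, ← Real.exp_add, ← Real.exp_add]
    norm_num
    ring_nf
  rw [h, Real.log_mul (Real.exp_pos _).ne' (by positivity),
    Real.log_mul (by norm_num) (Real.cosh_pos _).ne', Real.log_exp]
  ring

/-- Pólya-gamma quadratic majorization of `log(1 + exp)`. -/
lemma pg_bound (ψ z : ℝ) :
    Real.log (1 + Real.exp z) ≤
      Real.log (1 + Real.exp ψ) + (z - ψ) / 2 + pgw ψ / 2 * (z ^ 2 - ψ ^ 2) := by
  rw [log_one_add_exp z, log_one_add_exp ψ]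
  have := logcosh_bound ψ z
  linarith

/-- Monotone ascent of the Pólya-gamma weighted least squares update for logistic
regression with offsets: with fractional responses `s̄ᵢ ∈ [0,1]`, offsets `aᵢ`,
`ℓ*(β) = Σᵢ [s̄ᵢ·(xᵢᵀβ − aᵢ) − log(1 + exp(xᵢᵀβ − aᵢ))]`, current iterate `β⁰`,
`ψᵢ = xᵢᵀβ⁰ − aᵢ`, Pólya-gamma weights `ωᵢ = tanh(ψᵢ/2)/(2ψᵢ)` (`1/4` at `ψᵢ = 0`),
`ηᵢ = (s̄ᵢ − 1/2 + ωᵢaᵢ)/ωᵢ` and `Ω = diag(ω)`, if `XᵀΩX` is invertible then the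
update `β¹ = (XᵀΩX)⁻¹XᵀΩη` satisfies `ℓ*(β¹) ≥ ℓ*(β⁰)`. -/
theorem polya_gamma_wls_update_monotone (n P : ℕ)
    (X : Matrix (Fin n) (Fin P) ℝ)
    (sbar : Fin n → ℝ) (hs : ∀ i, sbar i ∈ Set.Icc (0 : ℝ) 1)
    (a : Fin n → ℝ) (β0 : Fin P → ℝ)
    (ψ : Fin n → ℝ) (hψ : ψ = fun i => (X *ᵥ β0) i - a i)
    (ω : Fin n → ℝ)
    (hω : ω = fun i => if ψ i = 0 then 1 / 4 else Real.tanh (ψ i / 2) / (2 * ψ i))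
    (η : Fin n → ℝ) (hη : η = fun i => (sbar i - 1 / 2 + ω i * a i) / ω i)
    (hinv : IsUnit (Xᵀ * Matrix.diagonal ω * X))
    (β1 : Fin P → ℝ)
    (hβ1 : β1 = (Xᵀ * Matrix.diagonal ω * X)⁻¹ *ᵥ ((Xᵀ * Matrix.diagonal ω) *ᵥ η)) :
    (∑ i, (sbar i * ((X *ᵥ β1) i - a i) - Real.log (1 + Real.exp ((X *ᵥ β1) i - a i)))) ≥
      ∑ i, (sbar i * ((X *ᵥ β0) i - a i) - Real.log (1 + Real.exp ((X *ᵥ β0) i - a i))) := by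
  set m0 : Fin n → ℝ := X *ᵥ β0 with hm0
  set m1 : Fin n → ℝ := X *ᵥ β1 with hm1
  have hωpg : ∀ i, ω i = pgw (ψ i) := by
    intro i; rw [hω]; rfl
  have hωpos : ∀ i, 0 < ω i := by
    intro i; rw [hωpg]; exact pgw_pos _
  have hωη : ∀ i, ω i * η i = sbar i - 1 / 2 + ω i * a i := by
    intro i
    have hne0 : ω i ≠ 0 := (hωpos i).ne'
    rw [hη]
    field_simp
  have hψi : ∀ i, ψ i = m0 i - a i := by
    intro i; rw [hψ]
  -- normal equations
  have hne : (Xᵀ * Matrix.diagonal ω * X) *ᵥ β1 = (Xᵀ * Matrix.diagonal ω) *ᵥ η := by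
    rw [hβ1, Matrix.mulVec_mulVec,
      Matrix.mul_nonsing_inv _ ((Matrix.isUnit_iff_isUnit_det _).mp hinv), Matrix.one_mulVec]
  -- the weighted residual is orthogonal to the column space
  have hcrossvec : Xᵀ *ᵥ (fun i => ω i * (m1 i - η i)) = 0 := by
    have hu : (fun i => ω i * (m1 i - η i)) = Matrix.diagonal ω *ᵥ (m1 - η) := by
      funext i
      rw [Matrix.mulVec_diagonal]
      simp
    rw [hu, Matrix.mulVec_mulVec, Matrix.mulVec_sub, hm1, Matrix.mulVec_mulVec,
      hne, sub_self]
  have hcross : ∑ i, (m0 i - m1 i) * (ω i * (m1 i - η i)) = 0 := by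
    have hd : ∀ i, m0 i - m1 i = ∑ j, X i j * (β0 j - β1 j) := by
      intro i
      simp only [hm0, hm1, Matrix.mulVec, dotProduct, ← Finset.sum_sub_distrib]
      congr 1; funext j; ring
    calc ∑ i, (m0 i - m1 i) * (ω i * (m1 i - η i))
        = ∑ i, ∑ j, X i j * (β0 j - β1 j) * (ω i * (m1 i - η i)) := by
          apply Finset.sum_congr rfl
          intro i _
          rw [hd i, Finset.sum_mul]
      _ = ∑ j, ∑ i, X i j * (β0 j - β1 j) * (ω i * (m1 i - η i)) := Finset.sum_comm
      _ = ∑ j, (β0 j - β1 j) * (Xᵀ *ᵥ (fun i => ω i * (m1 i - η i))) j := by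
          apply Finset.sum_congr rfl
          intro j _
          simp only [Matrix.mulVec, dotProduct, Matrix.transpose_apply, Finset.mul_sum]
          apply Finset.sum_congr rfl
          intro i _
          ring
      _ = 0 := by rw [hcrossvec]; simp
  -- pointwise minorization gap
  have key : ∀ i, ω i / 2 * ((m0 i - η i) ^ 2 - (m1 i - η i) ^ 2) ≤
      (sbar i * (m1 i - a i) - Real.log (1 + Real.exp (m1 i - a i))) -
      (sbar i * (m0 i - a i) - Real.log (1 + Real.exp (m0 i - a i))) := by
    intro i
    have hpg := pg_bound (ψ i) (m1 i - a i)
    rw [← hωpg i] at hpg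
    have halg : (sbar i - 1 / 2) * ((m1 i - a i) - ψ i) -
        ω i / 2 * ((m1 i - a i) ^ 2 - ψ i ^ 2) =
        ω i / 2 * ((m0 i - η i) ^ 2 - (m1 i - η i) ^ 2) := by
      rw [hψi i]
      linear_combination (m0 i - m1 i) * hωη i
    rw [hψi i] at hpg halg
    linarith
  -- sum up
  have hsum : ∑ i, ω i / 2 * ((m0 i - η i) ^ 2 - (m1 i - η i) ^ 2) ≤
      (∑ i, (sbar i * (m1 i - a i) - Real.log (1 + Real.exp (m1 i - a i)))) -
      ∑ i, (sbar i * (m0 i - a i) - Real.log (1 + Real.exp (m0 i - a i))) := by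
    rw [← Finset.sum_sub_distrib]
    exact Finset.sum_le_sum fun i _ => key i
  have hexpand : ∑ i, ω i / 2 * ((m0 i - η i) ^ 2 - (m1 i - η i) ^ 2) =
      (∑ i, ω i / 2 * (m0 i - m1 i) ^ 2) +
      ∑ i, (m0 i - m1 i) * (ω i * (m1 i - η i)) := by
    rw [← Finset.sum_add_distrib]
    apply Finset.sum_congr rfl
    intro i _
    ring
  have hnn : 0 ≤ ∑ i, ω i / 2 * (m0 i - m1 i) ^ 2 :=
    Finset.sum_nonneg fun i _ => mul_nonneg (by linarith [hωpos i]) (sq_nonneg _)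
  have : 0 ≤ ∑ i, ω i / 2 * ((m0 i - η i) ^ 2 - (m1 i - η i) ^ 2) := by
    rw [hexpand, hcross]
    linarith
  linarith
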